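/- arXiv:2103.10092 — 2 statements merged into one kernel-verified Lean document; each statement's English description precedes it below -/
import Mathlib

section
/- Let W₀ ⊂ ℝ² be a bounded open set, U an open set with closure(W₀) ⊂ U, α₀ > 0, and let ψ : U → ℝ be three times continuously differentiable with ψ(x) ≥ 0 and |∇ψ(x)| ≥ α₀ for all x ∈ closure(W₀). For β > 0 set φ_β := e^{βψ}. Then there exists β₀ > 0, depending only on ψ and α₀, such that for all β ≥ β₀ and all x ∈ closure(W₀): |∇φ_β(x)| ≥ β₀ α₀ and Δφ_β(x) ≥ 0, where Δ denotes the Laplacian on ℝ². -/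
noncomputable section

open scoped RealInnerProductSpace

/-- Euclidean plane `ℝ²`. -/
abbrev E2 : Type := EuclideanSpace ℝ (Fin 2)

/-- The `j`-th standard basis vector of `ℝ²`. -/
def b2 (j : Fin 2) : E2 := EuclideanSpace.single j 1

/-- The Laplacian `Δf = ∑ⱼ ∂ⱼ²f` of a real valued function on `ℝ²`. -/
def lap2 (f : E2 → ℝ) (x : E2) : ℝ :=
  ∑ j, fderiv ℝ (fun y => fderiv ℝ f y (b2 j)) x (b2 j)

/-- The weight `φ_β = e^{βψ}`. -/
def phiB (ψ : E2 → ℝ) (β : ℝ) : E2 → ℝ := fun y => Real.exp (β * ψ y)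

lemma phiB_hasFDerivAt {ψ : E2 → ℝ} (β : ℝ) {y : E2} (hy : DifferentiableAt ℝ ψ y) :
    HasFDerivAt (phiB ψ β) ((β * Real.exp (β * ψ y)) • fderiv ℝ ψ y) y := by
  have h1 : HasFDerivAt (fun z => β * ψ z) (β • fderiv ℝ ψ y) y :=
    hy.hasFDerivAt.const_mul β
  have h2 := h1.exp
  have h3 : (β * Real.exp (β * ψ y)) • fderiv ℝ ψ y = Real.exp (β * ψ y) • β • fderiv ℝ ψ y := by
    rw [smul_smul, mul_comm]
  rw [h3]
  exact h2

lemma lap2_contOn {ψ : E2 → ℝ} {U : Set E2} (hU : IsOpen U) (hψ : ContDiffOn ℝ 3 ψ U) :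
    ContinuousOn (lap2 ψ) U := by
  apply continuousOn_finset_sum _ fun j _ => ?_
  have h1 : ContDiffOn ℝ 2 (fderiv ℝ ψ) U := hψ.fderiv_of_isOpen hU (by norm_num)
  have h2 : ContDiffOn ℝ 2 (fun y => fderiv ℝ ψ y (b2 j)) U := h1.clm_apply contDiffOn_const
  have h3 : ContDiffOn ℝ 1 (fderiv ℝ (fun y => fderiv ℝ ψ y (b2 j))) U :=
    h2.fderiv_of_isOpen hU (by norm_num)
  exact (h3.clm_apply contDiffOn_const).continuousOn

lemma lap2_phiB {ψ : E2 → ℝ} (β : ℝ) {U : Set E2} (hU : IsOpen U)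
    (hψ : ContDiffOn ℝ 3 ψ U) {x : E2} (hx : x ∈ U) :
    lap2 (phiB ψ β) x =
      β * Real.exp (β * ψ x) *
        (β * ∑ j, (fderiv ℝ ψ x (b2 j)) ^ 2 + lap2 ψ x) := by
  have hdiff : ∀ y ∈ U, DifferentiableAt ℝ ψ y := fun y hy =>
    (hψ.contDiffAt (hU.mem_nhds hy)).differentiableAt (by norm_num)
  have hψ1 : ∀ j : Fin 2, ContDiffAt ℝ 2 (fun y => fderiv ℝ ψ y (b2 j)) x := by
    intro j
    exact ((hψ.contDiffAt (hU.mem_nhds hx)).fderiv_right (by norm_num)).clm_apply contDiffAt_const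
  unfold lap2
  have key : ∀ j : Fin 2,
      fderiv ℝ (fun y => fderiv ℝ (phiB ψ β) y (b2 j)) x (b2 j) =
        β * Real.exp (β * ψ x) *
          (β * (fderiv ℝ ψ x (b2 j)) ^ 2 +
           fderiv ℝ (fun y => fderiv ℝ ψ y (b2 j)) x (b2 j)) := by
    intro j
    have hev : (fun y => fderiv ℝ (phiB ψ β) y (b2 j)) =ᶠ[nhds x]
        (fun y => (β * Real.exp (β * ψ y)) * fderiv ℝ ψ y (b2 j)) := by
      filter_upwards [hU.mem_nhds hx] with y hy
      rw [(phiB_hasFDerivAt β (hdiff y hy)).fderiv]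
      simp
    rw [hev.fderiv_eq]
    -- product rule
    have hc : HasFDerivAt (fun y => β * Real.exp (β * ψ y))
        ((β * (β * Real.exp (β * ψ x))) • fderiv ℝ ψ x) x := by
      have := (phiB_hasFDerivAt β (hdiff x hx)).const_mul β
      simpa [smul_smul, phiB] using this
    have hd : HasFDerivAt (fun y => fderiv ℝ ψ y (b2 j))
        (fderiv ℝ (fun y => fderiv ℝ ψ y (b2 j)) x) x :=
      ((hψ1 j).differentiableAt (by norm_num)).hasFDerivAt
    have := (hc.mul hd).fderiv
    rw [show (fun y => β * Real.exp (β * ψ y) * fderiv ℝ ψ y (b2 j)) =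
      ((fun y => β * Real.exp (β * ψ y)) * fun y => fderiv ℝ ψ y (b2 j)) from rfl, this]
    simp only [ContinuousLinearMap.add_apply, ContinuousLinearMap.coe_smul',
      Pi.smul_apply, smul_eq_mul]
    ring
  rw [Finset.sum_congr rfl (fun j _ => key j), ← Finset.mul_sum,
    Finset.sum_add_distrib, ← Finset.mul_sum]

lemma gradient_phiB {ψ : E2 → ℝ} (β : ℝ) {x : E2} (hd : DifferentiableAt ℝ ψ x) :
    gradient (phiB ψ β) x = (β * Real.exp (β * ψ x)) • gradient ψ x := by
  have h := (phiB_hasFDerivAt β hd).fderiv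
  show (InnerProductSpace.toDual ℝ E2).symm (fderiv ℝ (phiB ψ β) x) = _
  rw [h, map_smul]
  rfl

lemma sum_sq_fderiv {ψ : E2 → ℝ} {x : E2} (hd : DifferentiableAt ℝ ψ x) :
    ∑ j, (fderiv ℝ ψ x (b2 j)) ^ 2 = ‖gradient ψ x‖ ^ 2 := by
  have h : ∀ j : Fin 2, fderiv ℝ ψ x (b2 j) = gradient ψ x j := by
    intro j
    have : ⟪gradient ψ x, b2 j⟫ = fderiv ℝ ψ x (b2 j) :=
      InnerProductSpace.toDual_symm_apply
    rw [← this]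
    simp only [b2, EuclideanSpace.inner_single_right]
    simp
  simp only [h]
  rw [← real_inner_self_eq_norm_sq]
  rw [PiLp.inner_apply]
  simp [RCLike.inner_apply, sq]

/-- For `ψ : U → ℝ` of class `C³` with `ψ ≥ 0` and `|∇ψ| ≥ α₀ > 0` on
`closure W₀`, there is `β₀ > 0`, depending only on `ψ` and `α₀`, such that for all `β ≥ β₀`
and `x ∈ closure W₀` one has `|∇φ_β(x)| ≥ β₀ α₀` and `Δφ_β(x) ≥ 0`, where `φ_β = e^{βψ}`. -/
theorem stmt10 (W₀ U : Set E2) (hW₀ : IsOpen W₀) (hW₀bd : Bornology.IsBounded W₀)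
    (hU : IsOpen U) (hWU : closure W₀ ⊆ U) (α₀ : ℝ) (hα₀ : 0 < α₀)
    (ψ : E2 → ℝ) (hψ : ContDiffOn ℝ 3 ψ U)
    (hψ0 : ∀ x ∈ closure W₀, 0 ≤ ψ x)
    (hψgrad : ∀ x ∈ closure W₀, α₀ ≤ ‖gradient ψ x‖) :
    ∃ β₀ : ℝ, 0 < β₀ ∧
      ∀ β : ℝ, β₀ ≤ β → ∀ x ∈ closure W₀,
        β₀ * α₀ ≤ ‖gradient (phiB ψ β) x‖ ∧ 0 ≤ lap2 (phiB ψ β) x := by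
  have hK : IsCompact (closure W₀) :=
    Metric.isCompact_of_isClosed_isBounded isClosed_closure hW₀bd.closure
  obtain ⟨M, hM⟩ := hK.exists_bound_of_continuousOn ((lap2_contOn hU hψ).mono hWU)
  refine ⟨max 1 (M / α₀ ^ 2), lt_of_lt_of_le one_pos (le_max_left _ _), ?_⟩
  intro β hβ x hx
  set β₀ : ℝ := max 1 (M / α₀ ^ 2) with hβ₀def
  have hxU : x ∈ U := hWU hx
  have hd : DifferentiableAt ℝ ψ x :=
    (hψ.contDiffAt (hU.mem_nhds hxU)).differentiableAt (by norm_num)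
  have hβ₀1 : (1 : ℝ) ≤ β₀ := le_max_left _ _
  have hβpos : 0 < β := lt_of_lt_of_le one_pos (hβ₀1.trans hβ)
  have hexp : 1 ≤ Real.exp (β * ψ x) := by
    rw [Real.one_le_exp_iff]
    exact mul_nonneg hβpos.le (hψ0 x hx)
  have hA : β ≤ β * Real.exp (β * ψ x) := le_mul_of_one_le_right hβpos.le hexp
  constructor
  · rw [gradient_phiB β hd, norm_smul]
    calc β₀ * α₀ ≤ β * ‖gradient ψ x‖ :=
          mul_le_mul hβ (hψgrad x hx) hα₀.le hβpos.le
      _ ≤ ‖β * Real.exp (β * ψ x)‖ * ‖gradient ψ x‖ := by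
          apply mul_le_mul_of_nonneg_right _ (norm_nonneg _)
          rw [Real.norm_eq_abs, abs_of_pos (by positivity)]
          exact hA
  · rw [lap2_phiB β hU hψ hxU, sum_sq_fderiv hd]
    have hMx := hM x hx
    rw [Real.norm_eq_abs] at hMx
    have h1 : M ≤ β * ‖gradient ψ x‖ ^ 2 := by
      have hβM : M / α₀ ^ 2 ≤ β := (le_max_right _ _).trans hβ
      have : M ≤ β * α₀ ^ 2 := by
        rw [div_le_iff₀ (by positivity)] at hβM
        linarith
      have h2 : α₀ ^ 2 ≤ ‖gradient ψ x‖ ^ 2 := by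
        apply pow_le_pow_left₀ hα₀.le (hψgrad x hx)
      nlinarith [hψgrad x hx]
    have : 0 ≤ β * ‖gradient ψ x‖ ^ 2 + lap2 ψ x := by
      have := abs_le.mp hMx
      linarith
    positivity
end
end

section
/- Let W₀ ⊂ ℝ² be a bounded open set, U an open set with closure(W₀) ⊂ U, α₀ > 0, and let ψ : U → ℝ be three times continuously differentiable with ψ(x) ≥ 0 and |∇ψ(x)| ≥ α₀ for all x ∈ closure(W₀). For β > 0 set φ_β := e^{βψ}. Then there exist constants β₀, C₀, C₁, C₂ > 0, depending only on ψ and α₀, such that for all β ≥ β₀ and all x ∈ closure(W₀): (i) ∇(|∇φ_β|²)(x) · ∇φ_β(x) ≥ C₀ β |∇φ_β(x)|³; (ii) ⟨H(φ_β)(x) ξ, ξ⟩ + C₁ β |∇φ_β(x)| |ξ|² ≥ 0 for every ξ ∈ ℝ², where H(φ_β) denotes the Hessian matrix of φ_β; and (iii) the function |∇φ_β| is twice continuously differentiable on a neighborhood of closure(W₀) and |Δ(|∇φ_β|)(x)| ≤ C₂ |∇φ_β(x)|³. -/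
noncomputable section

open scoped RealInnerProductSpace

open scoped Topology

lemma fderiv_inner_gradient {f : E2 → ℝ} {x : E2} (h : DifferentiableAt ℝ f x) (v : E2) :
    fderiv ℝ f x v = ⟪gradient f x, v⟫ := by
  rw [h.hasGradientAt.hasFDerivAt.fderiv]
  exact InnerProductSpace.toDual_apply_apply

lemma hasFDerivAt_exp_mul {ψ : E2 → ℝ} (β : ℝ) {x : E2} (h : DifferentiableAt ℝ ψ x) :
    HasFDerivAt (fun y => Real.exp (β * ψ y)) ((β * Real.exp (β * ψ x)) • fderiv ℝ ψ x) x := by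
  have h2 := (h.hasFDerivAt.const_mul β).exp
  rwa [smul_smul, mul_comm (Real.exp (β * ψ x)) β] at h2

lemma hasGradientAt_exp_mul {ψ : E2 → ℝ} (β : ℝ) {x : E2} (h : DifferentiableAt ℝ ψ x) :
    HasGradientAt (fun y => Real.exp (β * ψ y)) ((β * Real.exp (β * ψ x)) • gradient ψ x) x := by
  have h2 := hasFDerivAt_exp_mul β h
  rwa [hasGradientAt_iff_hasFDerivAt, map_smul, ← h.hasGradientAt.hasFDerivAt.fderiv]

lemma contDiffOn_dir {f : E2 → ℝ} {s : Set E2} {m n : WithTop ℕ∞} (hs : IsOpen s)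
    (hf : ContDiffOn ℝ n f s) (hmn : m + 1 ≤ n) (v : E2) :
    ContDiffOn ℝ m (fun y => fderiv ℝ f y v) s :=
  (hf.fderiv_of_isOpen hs hmn).clm_apply contDiffOn_const

lemma fderiv_fderiv_mul {f g : E2 → ℝ} {x : E2} (v : E2)
    (hf : ContDiffAt ℝ 2 f x) (hg : ContDiffAt ℝ 2 g x) :
    fderiv ℝ (fun y => fderiv ℝ (fun z => f z * g z) y v) x v =
      fderiv ℝ (fun y => fderiv ℝ f y v) x v * g x
      + 2 * (fderiv ℝ f x v * fderiv ℝ g x v)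
      + f x * fderiv ℝ (fun y => fderiv ℝ g y v) x v := by
  have hev : (fun y => fderiv ℝ (fun z => f z * g z) y v)
      =ᶠ[𝓝 x] (fun y => f y * fderiv ℝ g y v + g y * fderiv ℝ f y v) := by
    filter_upwards [hf.eventually (by norm_num), hg.eventually (by norm_num)] with y hfy hgy
    rw [fderiv_fun_mul (hfy.differentiableAt (by norm_num)) (hgy.differentiableAt (by norm_num))]
    simp only [ContinuousLinearMap.add_apply, ContinuousLinearMap.coe_smul',
      Pi.smul_apply, smul_eq_mul]
  rw [hev.fderiv_eq]
  have hfd : DifferentiableAt ℝ f x := hf.differentiableAt (by norm_num)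
  have hgd : DifferentiableAt ℝ g x := hg.differentiableAt (by norm_num)
  have hDf : DifferentiableAt ℝ (fun y => fderiv ℝ f y v) x :=
    ((hf.fderiv_right (le_refl _)).clm_apply contDiffAt_const).differentiableAt one_ne_zero
  have hDg : DifferentiableAt ℝ (fun y => fderiv ℝ g y v) x :=
    ((hg.fderiv_right (le_refl _)).clm_apply contDiffAt_const).differentiableAt one_ne_zero
  rw [fderiv_fun_add (f := fun y => f y * fderiv ℝ g y v) (g := fun y => g y * fderiv ℝ f y v) (hfd.mul hDg) (hgd.mul hDf)]
  simp only [ContinuousLinearMap.add_apply]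
  rw [fderiv_fun_mul hfd hDg, fderiv_fun_mul hgd hDf]
  simp only [ContinuousLinearMap.add_apply, ContinuousLinearMap.coe_smul',
    Pi.smul_apply, smul_eq_mul]
  ring

set_option maxHeartbeats 2000000 in
/-- For `ψ : U → ℝ` of class `C³` with `ψ ≥ 0` and `|∇ψ| ≥ α₀ > 0` on
`closure W₀`, there are `β₀, C₀, C₁, C₂ > 0`, depending only on `ψ` and `α₀`, such that for
all `β ≥ β₀` and all `x ∈ closure W₀` (with `φ_β = e^{βψ}`):
(i) `∇(|∇φ_β|²)·∇φ_β ≥ C₀ β |∇φ_β|³`;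
(ii) `⟨H(φ_β)ξ, ξ⟩ + C₁ β |∇φ_β| |ξ|² ≥ 0` for all `ξ ∈ ℝ²`;
(iii) `|∇φ_β|` is `C²` on a neighborhood of `closure W₀` and `|Δ(|∇φ_β|)| ≤ C₂ |∇φ_β|³`. -/
theorem stmt11 (W₀ U : Set E2) (hW₀ : IsOpen W₀) (hW₀bd : Bornology.IsBounded W₀)
    (hU : IsOpen U) (hWU : closure W₀ ⊆ U) (α₀ : ℝ) (hα₀ : 0 < α₀)
    (ψ : E2 → ℝ) (hψ : ContDiffOn ℝ 3 ψ U)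
    (hψ0 : ∀ x ∈ closure W₀, 0 ≤ ψ x)
    (hψgrad : ∀ x ∈ closure W₀, α₀ ≤ ‖gradient ψ x‖) :
    ∃ β₀ C₀ C₁ C₂ : ℝ, 0 < β₀ ∧ 0 < C₀ ∧ 0 < C₁ ∧ 0 < C₂ ∧
      ∀ β : ℝ, β₀ ≤ β →
        (∀ x ∈ closure W₀,
          C₀ * β * ‖gradient (phiB ψ β) x‖ ^ 3 ≤
            ⟪gradient (fun y => ‖gradient (phiB ψ β) y‖ ^ 2) x, gradient (phiB ψ β) x⟫) ∧
        (∀ x ∈ closure W₀, ∀ ξ : E2,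
          0 ≤ iteratedFDeriv ℝ 2 (phiB ψ β) x ![ξ, ξ] +
            C₁ * β * ‖gradient (phiB ψ β) x‖ * ‖ξ‖ ^ 2) ∧
        (∃ V : Set E2, IsOpen V ∧ closure W₀ ⊆ V ∧
          ContDiffOn ℝ 2 (fun y => ‖gradient (phiB ψ β) y‖) V ∧
          ∀ x ∈ closure W₀,
            |lap2 (fun y => ‖gradient (phiB ψ β) y‖) x| ≤
              C₂ * ‖gradient (phiB ψ β) x‖ ^ 3) := by
  classical
  have hK : IsCompact (closure W₀) := hW₀bd.isCompact_closure
  have hψ2 : ContDiffOn ℝ 2 ψ U := hψ.of_le (by norm_num)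
  have hdiffψ : ∀ y ∈ U, DifferentiableAt ℝ ψ y := fun y hy =>
    ((hψ y hy).contDiffAt (hU.mem_nhds hy)).differentiableAt (by norm_num)
  have hg : ContDiffOn ℝ 2 (fun y => gradient ψ y) U := by
    have h1 : ContDiffOn ℝ 2 (fderiv ℝ ψ) U := hψ.fderiv_of_isOpen hU (by norm_num)
    exact (InnerProductSpace.toDual ℝ E2).symm.contDiff.comp_contDiffOn h1
  have hq : ContDiffOn ℝ 2 (fun y => ‖gradient ψ y‖ ^ 2) U := hg.norm_sq ℝ
  set V : Set E2 := U ∩ (fun y => ‖gradient ψ y‖ ^ 2) ⁻¹' Set.Ioi 0 with hVdef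
  have hVopen : IsOpen V := hq.continuousOn.isOpen_inter_preimage hU isOpen_Ioi
  have hVU : V ⊆ U := Set.inter_subset_left
  have hKV : closure W₀ ⊆ V := by
    intro x hx
    refine ⟨hWU hx, ?_⟩
    have h1 := hψgrad x hx
    have : (0:ℝ) < ‖gradient ψ x‖ ^ 2 := by nlinarith
    exact this
  have hn : ContDiffOn ℝ 2 (fun y => ‖gradient ψ y‖) V := by
    refine (hg.mono hVU).norm ℝ fun y hy => ?_
    have h2 : (0:ℝ) < ‖gradient ψ y‖ ^ 2 := hy.2
    intro h0
    rw [h0] at h2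
    simp at h2
  -- bound M for part (i)
  obtain ⟨M0, hM0⟩ := hK.exists_bound_of_continuousOn
    ((((hq.continuousOn_fderiv_of_isOpen hU (by norm_num)).clm_apply
      hg.continuousOn)).mono hWU)
  set M := max M0 0 with hMdef
  have hMnn : 0 ≤ M := le_max_right _ _
  have hM : ∀ x ∈ closure W₀,
      |fderiv ℝ (fun y => ‖gradient ψ y‖ ^ 2) x (gradient ψ x)| ≤ M := fun x hx => by
    have := hM0 x hx
    rw [Real.norm_eq_abs] at this
    exact this.trans (le_max_left _ _)
  -- bound K2 for part (ii)
  obtain ⟨K0, hK0⟩ := hK.exists_bound_of_continuousOn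
    (((hψ.fderiv_of_isOpen (m := 2) hU (by norm_num)).continuousOn_fderiv_of_isOpen hU
      (by norm_num)).mono hWU)
  set K2 := max K0 1 with hK2def
  have hK21 : (1:ℝ) ≤ K2 := le_max_right _ _
  have hK2 : ∀ x ∈ closure W₀, ‖fderiv ℝ (fderiv ℝ ψ) x‖ ≤ K2 := fun x hx =>
    (hK0 x hx).trans (le_max_left _ _)
  -- bounds for part (iii)
  have hTbound : ∀ j : Fin 2, ∃ C : ℝ, ∀ x ∈ closure W₀,
      |fderiv ℝ (fun y => fderiv ℝ ψ y (b2 j)) x (b2 j)| * ‖gradient ψ x‖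
      + (fderiv ℝ ψ x (b2 j)) ^ 2 * ‖gradient ψ x‖
      + 2 * |fderiv ℝ ψ x (b2 j) * fderiv ℝ (fun z => ‖gradient ψ z‖) x (b2 j)|
      + |fderiv ℝ (fun y => fderiv ℝ (fun z => ‖gradient ψ z‖) y (b2 j)) x (b2 j)| ≤ C := by
    intro j
    have c1 : ContinuousOn (fun y => fderiv ℝ ψ y (b2 j)) V :=
      ((contDiffOn_dir (m := 2) hU hψ (by norm_num) (b2 j)).mono hVU).continuousOn
    have c2 : ContinuousOn (fun y => fderiv ℝ (fun z => fderiv ℝ ψ z (b2 j)) y (b2 j)) V :=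
      ((contDiffOn_dir (m := 1) hU (contDiffOn_dir (m := 2) hU hψ (by norm_num) (b2 j))
        (by norm_num) (b2 j)).mono hVU).continuousOn
    have c3 : ContinuousOn (fun y => fderiv ℝ (fun z => ‖gradient ψ z‖) y (b2 j)) V :=
      (contDiffOn_dir (m := 1) hVopen hn (by norm_num) (b2 j)).continuousOn
    have c4 : ContinuousOn
        (fun y => fderiv ℝ (fun z => fderiv ℝ (fun w => ‖gradient ψ w‖) z (b2 j)) y (b2 j)) V :=
      (contDiffOn_dir (m := 0) hVopen (contDiffOn_dir (m := 1) hVopen hn (by norm_num) (b2 j))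
        (by norm_num) (b2 j)).continuousOn
    have cn : ContinuousOn (fun y => ‖gradient ψ y‖) V := hn.continuousOn
    obtain ⟨C, hC⟩ := hK.exists_bound_of_continuousOn
      (((((c2.abs.mul cn).add ((c1.pow 2).mul cn)).add
        (continuousOn_const.mul (c1.mul c3).abs)).add c4.abs).mono hKV)
    refine ⟨C, fun x hx => ?_⟩
    have := hC x hx
    rw [Real.norm_eq_abs] at this
    exact (le_abs_self _).trans this
  choose Tc hTc using hTbound
  set M3 : ℝ := 1 + ∑ j : Fin 2, max (Tc j) 0 with hM3def
  have hM31 : (1:ℝ) ≤ M3 := by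
    have : (0:ℝ) ≤ ∑ j : Fin 2, max (Tc j) 0 :=
      Finset.sum_nonneg fun j _ => le_max_right _ _
    simp only [hM3def]; linarith
  -- the constants
  refine ⟨1 + M / α₀ ^ 4, α₀, K2 / α₀, M3 / α₀ ^ 3, ?_, hα₀, ?_, ?_, ?_⟩
  · have : 0 ≤ M / α₀ ^ 4 := div_nonneg hMnn (by positivity)
    linarith
  · exact div_pos (lt_of_lt_of_le one_pos hK21) hα₀
  · exact div_pos (lt_of_lt_of_le one_pos hM31) (by positivity)
  intro β hβ
  have hβ1 : (1:ℝ) ≤ β := by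
    have : 0 ≤ M / α₀ ^ 4 := div_nonneg hMnn (by positivity)
    linarith
  have hβ0 : (0:ℝ) < β := lt_of_lt_of_le one_pos hβ1
  have hgradeq : ∀ y ∈ U, gradient (phiB ψ β) y
      = (β * Real.exp (β * ψ y)) • gradient ψ y := fun y hy =>
    (hasGradientAt_exp_mul β (hdiffψ y hy)).gradient
  have hnormΦ : ∀ y ∈ U, ‖gradient (phiB ψ β) y‖
      = β * Real.exp (β * ψ y) * ‖gradient ψ y‖ := by
    intro y hy
    rw [hgradeq y hy, norm_smul, Real.norm_eq_abs, abs_of_pos (by positivity)]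
  refine ⟨?_, ?_, ?_⟩
  · -- part (i)
    intro x hx
    have hxU : x ∈ U := hWU hx
    have hψd : DifferentiableAt ℝ ψ x := hdiffψ x hxU
    have hqd : DifferentiableAt ℝ (fun y => ‖gradient ψ y‖ ^ 2) x :=
      ((hq x hxU).contDiffAt (hU.mem_nhds hxU)).differentiableAt (by norm_num)
    have hcA : HasFDerivAt (fun y => β * Real.exp (β * ψ y))
        (β • ((β * Real.exp (β * ψ x)) • fderiv ℝ ψ x)) x :=
      (hasFDerivAt_exp_mul β hψd).const_mul β
    have hR := (hcA.mul hcA).mul hqd.hasFDerivAt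
    have hGR : (fun y => ‖gradient (phiB ψ β) y‖ ^ 2) =ᶠ[𝓝 x]
        (fun y => ((β * Real.exp (β * ψ y)) * (β * Real.exp (β * ψ y))) * ‖gradient ψ y‖ ^ 2) := by
      filter_upwards [hU.mem_nhds hxU] with y hy
      rw [hnormΦ y hy]; ring
    have hGdiff : DifferentiableAt ℝ (fun y => ‖gradient (phiB ψ β) y‖ ^ 2) x :=
      hGR.differentiableAt_iff.mpr hR.differentiableAt
    rw [← fderiv_inner_gradient hGdiff, hGR.fderiv_eq, HasFDerivAt.fderiv (f := fun y => ((β * Real.exp (β * ψ y)) * (β * Real.exp (β * ψ y))) * ‖gradient ψ y‖ ^ 2) hR, hnormΦ x hxU,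
      hgradeq x hxU]
    simp only [ContinuousLinearMap.add_apply, ContinuousLinearMap.coe_smul',
      Pi.smul_apply, map_smul, smul_eq_mul, Pi.mul_apply]
    rw [fderiv_inner_gradient hψd, real_inner_self_eq_norm_sq]
    have hnx : α₀ ≤ ‖gradient ψ x‖ := hψgrad x hx
    have hA0 : (0:ℝ) < Real.exp (β * ψ x) := Real.exp_pos _
    have hr : |fderiv ℝ (fun y => ‖gradient ψ y‖ ^ 2) x (gradient ψ x)| ≤ M := hM x hx
    have hβM : M ≤ β * α₀ ^ 4 := by
      have h4 : (0:ℝ) < α₀ ^ 4 := by positivity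
      have h5 := mul_le_mul_of_nonneg_right hβ (le_of_lt h4)
      have heq : (1 + M / α₀ ^ 4) * α₀ ^ 4 = α₀ ^ 4 + M := by field_simp
      nlinarith
    set r := fderiv ℝ (fun y => ‖gradient ψ y‖ ^ 2) x (gradient ψ x) with hrdef
    set a := Real.exp (β * ψ x) with hadef
    set nx := ‖gradient ψ x‖ with hnxdef
    have key : α₀ * β * nx ^ 3 ≤ 2 * β * nx ^ 4 + r := by
      have h1 : -M ≤ r := neg_le_of_abs_le hr
      have hp3 : α₀ ^ 3 ≤ nx ^ 3 := pow_le_pow_left₀ hα₀.le hnx 3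
      have hp4 : α₀ * nx ^ 3 ≤ nx ^ 4 := by
        nlinarith [mul_le_mul_of_nonneg_right hnx (pow_nonneg (hα₀.le.trans hnx) 3)]
      have hint1 : β * (α₀ * nx ^ 3) ≤ β * nx ^ 4 := mul_le_mul_of_nonneg_left hp4 hβ0.le
      have hint2 : β * α₀ * α₀ ^ 3 ≤ β * α₀ * nx ^ 3 :=
        mul_le_mul_of_nonneg_left hp3 (by positivity)
      nlinarith [hint1, hint2, h1, hβM]
    nlinarith [mul_le_mul_of_nonneg_left key
      (show (0:ℝ) ≤ β ^ 3 * a ^ 3 by positivity)]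
  · -- part (ii)
    intro x hx ξ
    have hxU : x ∈ U := hWU hx
    have hψd : DifferentiableAt ℝ ψ x := hdiffψ x hxU
    have hψ'd : DifferentiableAt ℝ (fderiv ℝ ψ) x :=
      (((hψ.fderiv_of_isOpen (m := 2) hU (by norm_num)) x hxU).contDiffAt
        (hU.mem_nhds hxU)).differentiableAt (by norm_num)
    have hev : (fderiv ℝ (phiB ψ β)) =ᶠ[𝓝 x]
        (fun y => (β * Real.exp (β * ψ y)) • fderiv ℝ ψ y) := by
      filter_upwards [hU.mem_nhds hxU] with y hy
      exact (hasFDerivAt_exp_mul β (hdiffψ y hy)).fderiv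
    have hsm := ((hasFDerivAt_exp_mul β hψd).const_mul β).smul hψ'd.hasFDerivAt
    rw [iteratedFDeriv_two_apply, hev.fderiv_eq, HasFDerivAt.fderiv (f := fun y => (β * Real.exp (β * ψ y)) • fderiv ℝ ψ y) hsm]
    simp only [Matrix.cons_val_zero, Matrix.cons_val_one, Matrix.head_cons,
      ContinuousLinearMap.add_apply, ContinuousLinearMap.coe_smul', Pi.smul_apply,
      ContinuousLinearMap.smulRight_apply, smul_eq_mul]
    have h2b : |fderiv ℝ (fderiv ℝ ψ) x ξ ξ| ≤ K2 * ‖ξ‖ ^ 2 := by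
      have h1 : |fderiv ℝ (fderiv ℝ ψ) x ξ ξ| ≤ ‖fderiv ℝ (fderiv ℝ ψ) x ξ‖ * ‖ξ‖ := by
        rw [← Real.norm_eq_abs]
        exact (fderiv ℝ (fderiv ℝ ψ) x ξ).le_opNorm ξ
      have h2 : ‖fderiv ℝ (fderiv ℝ ψ) x ξ‖ ≤ ‖fderiv ℝ (fderiv ℝ ψ) x‖ * ‖ξ‖ :=
        (fderiv ℝ (fderiv ℝ ψ) x).le_opNorm ξ
      have h3 := hK2 x hx
      nlinarith [norm_nonneg ξ, norm_nonneg (fderiv ℝ (fderiv ℝ ψ) x ξ)]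
    have hnx : α₀ ≤ ‖gradient ψ x‖ := hψgrad x hx
    rw [hnormΦ x hxU]
    set a := Real.exp (β * ψ x) with hadef
    have ha : (0:ℝ) < a := Real.exp_pos _
    have hdiv : K2 ≤ K2 / α₀ * ‖gradient ψ x‖ := by
      rw [div_mul_eq_mul_div, le_div_iff₀ hα₀]
      exact mul_le_mul_of_nonneg_left hnx (le_trans zero_le_one hK21)
    have e1 : K2 * (β * β * a * ‖ξ‖ ^ 2) ≤
        K2 / α₀ * ‖gradient ψ x‖ * (β * β * a * ‖ξ‖ ^ 2) :=
      mul_le_mul_of_nonneg_right hdiv (by positivity)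
    have e3 : (0:ℝ) ≤ K2 * β * a * ‖ξ‖ ^ 2 * (β - 1) :=
      mul_nonneg (by positivity) (by linarith)
    have e4 := mul_le_mul_of_nonneg_left (neg_le_of_abs_le h2b)
      (show (0:ℝ) ≤ β * a by positivity)
    have e5 : (0:ℝ) ≤ β ^ 2 * a * (fderiv ℝ ψ x ξ) ^ 2 := by positivity
    nlinarith [e1, e3, e4, e5]
  · -- part (iii)
    have hA2 : ContDiffOn ℝ 2 (fun y => Real.exp (β * ψ y)) U :=
      Real.contDiff_exp.comp_contDiffOn (contDiffOn_const.mul hψ2)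
    refine ⟨V, hVopen, hKV, ?_, ?_⟩
    · have hNR : ContDiffOn ℝ 2 (fun y => β * Real.exp (β * ψ y) * ‖gradient ψ y‖) V :=
        (contDiffOn_const.mul (hA2.mono hVU)).mul hn
      exact hNR.congr fun y hy => hnormΦ y (hVU hy)
    · intro x hx
      have hxU : x ∈ U := hWU hx
      have hxV : x ∈ V := hKV hx
      have hψd : DifferentiableAt ℝ ψ x := hdiffψ x hxU
      have hfA : ContDiffAt ℝ 2 (fun y => β * Real.exp (β * ψ y)) x :=
        ((contDiffOn_const.mul hA2) x hxU).contDiffAt (hU.mem_nhds hxU)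
      have hgn : ContDiffAt ℝ 2 (fun y => ‖gradient ψ y‖) x :=
        (hn x hxV).contDiffAt (hVopen.mem_nhds hxV)
      have hstep1 : ∀ j : Fin 2,
          fderiv ℝ (fun y => fderiv ℝ (fun z => ‖gradient (phiB ψ β) z‖) y (b2 j)) x (b2 j)
          = fderiv ℝ (fun y => fderiv ℝ
              (fun z => β * Real.exp (β * ψ z) * ‖gradient ψ z‖) y (b2 j)) x (b2 j) := by
        intro j
        have hev : (fun y => fderiv ℝ (fun z => ‖gradient (phiB ψ β) z‖) y (b2 j))
            =ᶠ[𝓝 x] (fun y => fderiv ℝ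
              (fun z => β * Real.exp (β * ψ z) * ‖gradient ψ z‖) y (b2 j)) := by
          filter_upwards [hU.mem_nhds hxU] with y hy
          have hev2 : (fun z => ‖gradient (phiB ψ β) z‖)
              =ᶠ[𝓝 y] (fun z => β * Real.exp (β * ψ z) * ‖gradient ψ z‖) := by
            filter_upwards [hU.mem_nhds hy] with z hz
            exact hnormΦ z hz
          rw [hev2.fderiv_eq]
        rw [hev.fderiv_eq]
      have hfA1 : ∀ y ∈ U, fderiv ℝ (fun z => β * Real.exp (β * ψ z)) y
          = (β ^ 2 * Real.exp (β * ψ y)) • fderiv ℝ ψ y := by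
        intro y hy
        rw [((hasFDerivAt_exp_mul β (hdiffψ y hy)).const_mul β).fderiv, smul_smul]
        congr 1
        ring
      have hDAj : ∀ j : Fin 2, fderiv ℝ (fun z => β * Real.exp (β * ψ z)) x (b2 j)
          = β ^ 2 * Real.exp (β * ψ x) * fderiv ℝ ψ x (b2 j) := by
        intro j
        rw [hfA1 x hxU]
        simp only [ContinuousLinearMap.coe_smul', Pi.smul_apply, smul_eq_mul]
        try ring
      have hDψd : ∀ j : Fin 2, DifferentiableAt ℝ (fun y => fderiv ℝ ψ y (b2 j)) x := by
        intro j
        exact (((contDiffOn_dir (m := 2) hU hψ (by norm_num) (b2 j)) x hxU).contDiffAt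
          (hU.mem_nhds hxU)).differentiableAt (by norm_num)
      have hD2Aj : ∀ j : Fin 2,
          fderiv ℝ (fun y => fderiv ℝ (fun z => β * Real.exp (β * ψ z)) y (b2 j)) x (b2 j)
          = β ^ 2 * Real.exp (β * ψ x) * fderiv ℝ (fun y => fderiv ℝ ψ y (b2 j)) x (b2 j)
            + β ^ 3 * Real.exp (β * ψ x) * (fderiv ℝ ψ x (b2 j)) ^ 2 := by
        intro j
        have hev : (fun y => fderiv ℝ (fun z => β * Real.exp (β * ψ z)) y (b2 j))
            =ᶠ[𝓝 x] (fun y => β ^ 2 * (Real.exp (β * ψ y) * fderiv ℝ ψ y (b2 j))) := by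
          filter_upwards [hU.mem_nhds hxU] with y hy
          rw [hfA1 y hy]
          simp only [ContinuousLinearMap.coe_smul', Pi.smul_apply, smul_eq_mul]
          ring
        have hAd : DifferentiableAt ℝ (fun y => Real.exp (β * ψ y)) x :=
          (hasFDerivAt_exp_mul β hψd).differentiableAt
        rw [hev.fderiv_eq, fderiv_const_mul (a := fun y => Real.exp (β * ψ y) * fderiv ℝ ψ y (b2 j)) (hAd.mul (hDψd j)) (β ^ 2)]
        simp only [ContinuousLinearMap.coe_smul', Pi.smul_apply, smul_eq_mul]
        rw [fderiv_fun_mul hAd (hDψd j)]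
        simp only [ContinuousLinearMap.add_apply, ContinuousLinearMap.coe_smul',
          Pi.smul_apply, smul_eq_mul]
        rw [(hasFDerivAt_exp_mul β hψd).fderiv]
        simp only [ContinuousLinearMap.coe_smul', Pi.smul_apply, smul_eq_mul]
        ring
      have hprod : ∀ j : Fin 2,
          fderiv ℝ (fun y => fderiv ℝ
            (fun z => β * Real.exp (β * ψ z) * ‖gradient ψ z‖) y (b2 j)) x (b2 j)
          = fderiv ℝ (fun y => fderiv ℝ (fun z => β * Real.exp (β * ψ z)) y (b2 j)) x (b2 j)
              * ‖gradient ψ x‖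
            + 2 * (fderiv ℝ (fun z => β * Real.exp (β * ψ z)) x (b2 j)
              * fderiv ℝ (fun z => ‖gradient ψ z‖) x (b2 j))
            + (β * Real.exp (β * ψ x))
              * fderiv ℝ (fun y => fderiv ℝ (fun z => ‖gradient ψ z‖) y (b2 j)) x (b2 j) :=
        fun j => fderiv_fderiv_mul (b2 j) hfA hgn
      rw [hnormΦ x hxU]
      have hlap : lap2 (fun y => ‖gradient (phiB ψ β) y‖) x
          = ∑ j : Fin 2, fderiv ℝ (fun y => fderiv ℝ
              (fun z => β * Real.exp (β * ψ z) * ‖gradient ψ z‖) y (b2 j)) x (b2 j) := by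
        simp only [lap2]
        exact Finset.sum_congr rfl fun j _ => hstep1 j
      rw [hlap]
      set a := Real.exp (β * ψ x) with hadef
      have ha : (0:ℝ) < a := Real.exp_pos _
      have ha1 : (1:ℝ) ≤ a := Real.one_le_exp (mul_nonneg hβ0.le (hψ0 x hx))
      have hnx : α₀ ≤ ‖gradient ψ x‖ := hψgrad x hx
      have hb32 : β ^ 2 ≤ β ^ 3 := by nlinarith
      have hb31 : β ≤ β ^ 3 := by nlinarith
      have hbound : ∀ j : Fin 2,
          |fderiv ℝ (fun y => fderiv ℝ
            (fun z => β * Real.exp (β * ψ z) * ‖gradient ψ z‖) y (b2 j)) x (b2 j)|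
          ≤ β ^ 3 * a *
            (|fderiv ℝ (fun y => fderiv ℝ ψ y (b2 j)) x (b2 j)| * ‖gradient ψ x‖
             + (fderiv ℝ ψ x (b2 j)) ^ 2 * ‖gradient ψ x‖
             + 2 * |fderiv ℝ ψ x (b2 j) * fderiv ℝ (fun z => ‖gradient ψ z‖) x (b2 j)|
             + |fderiv ℝ (fun y => fderiv ℝ (fun z => ‖gradient ψ z‖) y (b2 j)) x (b2 j)|) := by
        intro j
        rw [hprod j, hD2Aj j, hDAj j]
        set u1 := fderiv ℝ (fun y => fderiv ℝ ψ y (b2 j)) x (b2 j) with hu1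
        set u2 := fderiv ℝ ψ x (b2 j) with hu2
        set u3 := fderiv ℝ (fun z => ‖gradient ψ z‖) x (b2 j) with hu3
        set u4 := fderiv ℝ (fun y => fderiv ℝ (fun z => ‖gradient ψ z‖) y (b2 j)) x (b2 j)
          with hu4
        have hnn : (0:ℝ) ≤ ‖gradient ψ x‖ := norm_nonneg _
        rw [abs_le]
        constructor
        · nlinarith [show (0:ℝ) ≤ β ^ 3 * a * (u2 ^ 2 * ‖gradient ψ x‖) by positivity,
            mul_le_mul_of_nonneg_left (neg_abs_le u1)
              (show (0:ℝ) ≤ β ^ 2 * a * ‖gradient ψ x‖ by positivity),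
            mul_le_mul_of_nonneg_right hb32
              (show (0:ℝ) ≤ a * (|u1| * ‖gradient ψ x‖) by positivity),
            mul_le_mul_of_nonneg_left (neg_abs_le (u2 * u3))
              (show (0:ℝ) ≤ 2 * (β ^ 2 * a) by positivity),
            mul_le_mul_of_nonneg_right hb32 (show (0:ℝ) ≤ a * |u2 * u3| by positivity),
            mul_le_mul_of_nonneg_left (neg_abs_le u4) (show (0:ℝ) ≤ β * a by positivity),
            mul_le_mul_of_nonneg_right hb31 (show (0:ℝ) ≤ a * |u4| by positivity)]
        · nlinarith [mul_le_mul_of_nonneg_left (le_abs_self u1)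
              (show (0:ℝ) ≤ β ^ 2 * a * ‖gradient ψ x‖ by positivity),
            mul_le_mul_of_nonneg_right hb32
              (show (0:ℝ) ≤ a * (|u1| * ‖gradient ψ x‖) by positivity),
            mul_le_mul_of_nonneg_left (le_abs_self (u2 * u3))
              (show (0:ℝ) ≤ 2 * (β ^ 2 * a) by positivity),
            mul_le_mul_of_nonneg_right hb32 (show (0:ℝ) ≤ a * |u2 * u3| by positivity),
            mul_le_mul_of_nonneg_left (le_abs_self u4) (show (0:ℝ) ≤ β * a by positivity),
            mul_le_mul_of_nonneg_right hb31 (show (0:ℝ) ≤ a * |u4| by positivity)]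
      have hTsum : (∑ j : Fin 2,
          (|fderiv ℝ (fun y => fderiv ℝ ψ y (b2 j)) x (b2 j)| * ‖gradient ψ x‖
           + (fderiv ℝ ψ x (b2 j)) ^ 2 * ‖gradient ψ x‖
           + 2 * |fderiv ℝ ψ x (b2 j) * fderiv ℝ (fun z => ‖gradient ψ z‖) x (b2 j)|
           + |fderiv ℝ (fun y => fderiv ℝ (fun z => ‖gradient ψ z‖) y (b2 j)) x (b2 j)|))
          ≤ M3 := by
        have h1 : ∀ j ∈ (Finset.univ : Finset (Fin 2)),
            |fderiv ℝ (fun y => fderiv ℝ ψ y (b2 j)) x (b2 j)| * ‖gradient ψ x‖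
            + (fderiv ℝ ψ x (b2 j)) ^ 2 * ‖gradient ψ x‖
            + 2 * |fderiv ℝ ψ x (b2 j) * fderiv ℝ (fun z => ‖gradient ψ z‖) x (b2 j)|
            + |fderiv ℝ (fun y => fderiv ℝ (fun z => ‖gradient ψ z‖) y (b2 j)) x (b2 j)|
            ≤ max (Tc j) 0 := fun j _ => (hTc j x hx).trans (le_max_left _ _)
        have h2 := Finset.sum_le_sum h1
        rw [hM3def]
        linarith
      calc |∑ j : Fin 2, fderiv ℝ (fun y => fderiv ℝ
              (fun z => β * Real.exp (β * ψ z) * ‖gradient ψ z‖) y (b2 j)) x (b2 j)|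
          ≤ ∑ j : Fin 2, |fderiv ℝ (fun y => fderiv ℝ
              (fun z => β * Real.exp (β * ψ z) * ‖gradient ψ z‖) y (b2 j)) x (b2 j)| :=
            Finset.abs_sum_le_sum_abs _ _
        _ ≤ ∑ j : Fin 2, β ^ 3 * a *
            (|fderiv ℝ (fun y => fderiv ℝ ψ y (b2 j)) x (b2 j)| * ‖gradient ψ x‖
             + (fderiv ℝ ψ x (b2 j)) ^ 2 * ‖gradient ψ x‖
             + 2 * |fderiv ℝ ψ x (b2 j) * fderiv ℝ (fun z => ‖gradient ψ z‖) x (b2 j)|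
             + |fderiv ℝ (fun y => fderiv ℝ (fun z => ‖gradient ψ z‖) y (b2 j)) x (b2 j)|) :=
            Finset.sum_le_sum fun j _ => hbound j
        _ = β ^ 3 * a * (∑ j : Fin 2,
            (|fderiv ℝ (fun y => fderiv ℝ ψ y (b2 j)) x (b2 j)| * ‖gradient ψ x‖
             + (fderiv ℝ ψ x (b2 j)) ^ 2 * ‖gradient ψ x‖
             + 2 * |fderiv ℝ ψ x (b2 j) * fderiv ℝ (fun z => ‖gradient ψ z‖) x (b2 j)|
             + |fderiv ℝ (fun y => fderiv ℝ (fun z => ‖gradient ψ z‖) y (b2 j)) x (b2 j)|)) :=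
            (Finset.mul_sum _ _ _).symm
        _ ≤ β ^ 3 * a * M3 := mul_le_mul_of_nonneg_left hTsum (by positivity)
        _ ≤ M3 / α₀ ^ 3 * (β * a * ‖gradient ψ x‖) ^ 3 := by
            have hp3 : α₀ ^ 3 ≤ ‖gradient ψ x‖ ^ 3 := pow_le_pow_left₀ hα₀.le hnx 3
            have ha3 : a ≤ a ^ 3 := by
              nlinarith [mul_le_mul_of_nonneg_left ha1 (sq_nonneg a),
                mul_le_mul_of_nonneg_left ha1 ha.le]
            have e1 : β ^ 3 * a * M3 ≤ β ^ 3 * a ^ 3 * M3 := by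
              nlinarith [mul_le_mul_of_nonneg_right ha3
                (show (0:ℝ) ≤ β ^ 3 * M3 by positivity)]
            refine e1.trans ?_
            rw [div_mul_eq_mul_div, le_div_iff₀ (by positivity)]
            nlinarith [mul_le_mul_of_nonneg_left hp3
              (show (0:ℝ) ≤ β ^ 3 * a ^ 3 * M3 by positivity)]
end
end
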